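/- Let ψ_j(x) = Σ_{k=1}^{p} exp(Σ_i -ξ_{ijk} x_i) with ξ_{ijk} ≥ 0, and let x̂ ∈ ℝ^n with x̂ ≥ 0 and b_j = ψ_j(x̂). Then the function g(x) = (1/(2μ)) Σ_{j=1}^{m} (ψ_j(x) − b_j)^2 is convex on the box {x ∈ ℝ^n : 0 ≤ x ≤ x̂} (coordinatewise inequalities). -/

import Mathlib

lemma convexOn_sq_of_nonneg {E : Type*} [AddCommGroup E] [Module ℝ E]
    {s : Set E} {f : E → ℝ} (hf : ConvexOn ℝ s f) (h0 : ∀ x ∈ s, 0 ≤ f x) :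
    ConvexOn ℝ s (fun x => (f x) ^ 2) := by
  refine ⟨hf.1, fun x hx y hy a b ha hb hab => ?_⟩
  have h1 := hf.2 hx hy ha hb hab
  have hfx := h0 x hx
  have hfy := h0 y hy
  have h2 : 0 ≤ f (a • x + b • y) := h0 _ (hf.1 hx hy ha hb hab)
  simp only [smul_eq_mul] at h1 ⊢
  have key := pow_le_pow_left₀ h2 h1 2
  nlinarith [mul_nonneg (mul_nonneg ha hb) (sq_nonneg (f x - f y))]

lemma sum_convexOn {ι E : Type*} [AddCommGroup E] [Module ℝ E] (t : Finset ι)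
    {s : Set E} (hs : Convex ℝ s) (f : ι → E → ℝ)
    (h : ∀ i ∈ t, ConvexOn ℝ s (f i)) :
    ConvexOn ℝ s (fun x => ∑ i ∈ t, f i x) := by
  classical
  induction t using Finset.induction with
  | empty => simpa using convexOn_const 0 hs
  | insert _ _ hnot ih =>
    simp only [Finset.sum_insert hnot]
    exact (h _ (Finset.mem_insert_self _ _)).add
      (ih fun i hi => h i (Finset.mem_insert_of_mem hi))

theorem g_convex_on_box (m n p : ℕ) (hm : 0 < m) (hn : 0 < n) (hp : 0 < p)
    (μ : ℝ) (hμ : 0 < μ)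
    (ξ : Fin n → Fin m → Fin p → ℝ) (hξ : ∀ i j k, 0 ≤ ξ i j k)
    (xhat : Fin n → ℝ) (hxhat : ∀ i, 0 ≤ xhat i)
    (ψ : Fin m → (Fin n → ℝ) → ℝ)
    (hψ : ∀ j x, ψ j x = ∑ k : Fin p, Real.exp (∑ i : Fin n, -ξ i j k * x i))
    (b : Fin m → ℝ) (hb : ∀ j, b j = ψ j xhat) :
    ConvexOn ℝ {x : Fin n → ℝ | ∀ i, 0 ≤ x i ∧ x i ≤ xhat i}
      (fun x => (1 / (2 * μ)) * ∑ j : Fin m, (ψ j x - b j) ^ 2) := by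
  set S : Set (Fin n → ℝ) := {x : Fin n → ℝ | ∀ i, 0 ≤ x i ∧ x i ≤ xhat i}
  have hS : Convex ℝ S := by
    have : S = Set.pi Set.univ (fun i => Set.Icc 0 (xhat i)) := by
      ext x
      simp only [S, Set.mem_setOf_eq, Set.mem_pi, Set.mem_univ, Set.mem_Icc, true_implies]
    rw [this]
    exact convex_pi fun i _ => convex_Icc _ _
  -- each ψ j is convex on S
  have hψconv : ∀ j : Fin m, ConvexOn ℝ S (ψ j) := by
    intro j
    have := sum_convexOn (Finset.univ : Finset (Fin p)) hS
      (fun k x => Real.exp (∑ i : Fin n, -ξ i j k * x i)) ?_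
    · rw [show ψ j = _ from funext (hψ j)]
      exact this
    · intro k _
      set L : (Fin n → ℝ) → ℝ := fun x => ∑ i : Fin n, -ξ i j k * x i with hL
      have hlin : IsLinearMap ℝ L := by
        constructor
        · intro x y
          simp [L, mul_add, Finset.sum_add_distrib, add_comm]
        · intro c x
          simp only [L, Pi.smul_apply, smul_eq_mul, Finset.mul_sum]
          exact Finset.sum_congr rfl fun i _ => by ring
      have h1 := convexOn_exp.comp_affineMap (hlin.mk' L).toAffineMap
      have h2 : ConvexOn ℝ Set.univ (fun x => Real.exp (L x)) := by
        simp only [Set.preimage_univ] at h1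
        exact h1
      exact h2.subset (Set.subset_univ _) hS
  -- ψ j x - b j is nonneg on S
  have hnonneg : ∀ j : Fin m, ∀ x ∈ S, 0 ≤ ψ j x - b j := by
    intro j x hx
    rw [sub_nonneg, hb j, hψ j x, hψ j xhat]
    apply Finset.sum_le_sum
    intro k _
    apply Real.exp_le_exp.mpr
    apply Finset.sum_le_sum
    intro i _
    have hxi := hx i
    nlinarith [hξ i j k, hxi.1, hxi.2]
  -- assemble
  have hc : (0:ℝ) ≤ 1 / (2 * μ) := by positivity
  have hsum : ConvexOn ℝ S (fun x => ∑ j : Fin m, (ψ j x - b j) ^ 2) := by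
    apply sum_convexOn _ hS
    intro j _
    have hsub : ConvexOn ℝ S (fun x => ψ j x - b j) :=
      (hψconv j).sub (concaveOn_const _ hS)
    exact convexOn_sq_of_nonneg hsub (fun x hx => hnonneg j x hx)
  simpa [smul_eq_mul] using hsum.smul hc
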